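/- arXiv:2203.12278 — 3 statements merged into one kernel-verified Lean document; each statement's English description precedes it below -/
import Mathlib

section
/- The protected expected phylogenetic diversity f(S) = Σ_{a∈A} λ_a (1 − Π_{i∈L_a \ S} p_i) is a submodular set function on subsets of T: for all S ⊆ S' ⊆ T and any species j ∉ S', f(S ∪ {j}) − f(S) ≥ f(S' ∪ {j}) − f(S'). -/
lemma prod_subset_ge {T : Type} [DecidableEq T] (p : T → ℝ)
    (hp : ∀ i, 0 ≤ p i ∧ p i ≤ 1) {s t : Finset T} (hst : s ⊆ t) :
    ∏ i ∈ t, p i ≤ ∏ i ∈ s, p i := by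
  rw [← Finset.prod_sdiff hst]
  have h1 : ∏ i ∈ t \ s, p i ≤ 1 :=
    Finset.prod_le_one (fun i _ => (hp i).1) (fun i _ => (hp i).2)
  have h0 : 0 ≤ ∏ i ∈ s, p i := Finset.prod_nonneg (fun i _ => (hp i).1)
  nlinarith

/-- The protected ePD set function is submodular. -/
theorem protected_epd_submodular {A T : Type} [Fintype A] [DecidableEq T]
    (lam : A → ℝ) (L : A → Finset T) (p : T → ℝ)
    (hlam : ∀ a, 0 ≤ lam a)
    (hL : ∀ a, (L a).Nonempty)
    (hp : ∀ i, 0 ≤ p i ∧ p i ≤ 1)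
    (S S' : Finset T) (hSS' : S ⊆ S') (j : T) (hj : j ∉ S') :
    (∑ a : A, lam a * (1 - ∏ i ∈ L a \ insert j S', p i)) -
        (∑ a : A, lam a * (1 - ∏ i ∈ L a \ S', p i)) ≤
      (∑ a : A, lam a * (1 - ∏ i ∈ L a \ insert j S, p i)) -
        (∑ a : A, lam a * (1 - ∏ i ∈ L a \ S, p i)) := by
  rw [← Finset.sum_sub_distrib, ← Finset.sum_sub_distrib]
  apply Finset.sum_le_sum
  intro a _
  have key : (∏ i ∈ L a \ S', p i) - (∏ i ∈ L a \ insert j S', p i) ≤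
      (∏ i ∈ L a \ S, p i) - (∏ i ∈ L a \ insert j S, p i) := by
    have e1 : L a \ insert j S' = (L a \ S').erase j := by
      ext x; simp [Finset.mem_erase, Finset.mem_sdiff, Finset.mem_insert]; tauto
    have e2 : L a \ insert j S = (L a \ S).erase j := by
      ext x; simp [Finset.mem_erase, Finset.mem_sdiff, Finset.mem_insert]; tauto
    rw [e1, e2]
    by_cases hjL : j ∈ L a
    · have hjS' : j ∈ L a \ S' := Finset.mem_sdiff.mpr ⟨hjL, hj⟩
      have hjS : j ∈ L a \ S := Finset.mem_sdiff.mpr ⟨hjL, fun h => hj (hSS' h)⟩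
      rw [← Finset.mul_prod_erase _ _ hjS', ← Finset.mul_prod_erase _ _ hjS]
      have hsub : (L a \ S').erase j ⊆ (L a \ S).erase j :=
        Finset.erase_subset_erase _ (Finset.sdiff_subset_sdiff (le_refl _) hSS')
      have hle := prod_subset_ge p hp hsub
      have hpj := hp j
      nlinarith
    · have h1 : (L a \ S').erase j = L a \ S' := by
        apply Finset.erase_eq_of_notMem; simp [Finset.mem_sdiff, hjL]
      have h2 : (L a \ S).erase j = L a \ S := by
        apply Finset.erase_eq_of_notMem; simp [Finset.mem_sdiff, hjL]
      rw [h1, h2]; simp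
  have := hlam a
  nlinarith
end

section
/- If |p¹_i − p²_i| ≤ ε for all species i, then for every subset S ⊆ T, |f¹(S) − f²(S)| ≤ ε · |T| · Σ_{a∈A} λ_a; consequently, protecting the set optimal for the wrong scenario loses at most 2ε·|T|·Σ_{a∈A} λ_a of ePD: f¹(S*¹) − f¹(S*²) ≤ 2ε·|T|·Σ_{a∈A} λ_a. -/
lemma prod_diff_abs_le {T : Type} [DecidableEq T] (s : Finset T) (f g : T → ℝ)
    (hf : ∀ i, 0 ≤ f i ∧ f i ≤ 1) (hg : ∀ i, 0 ≤ g i ∧ g i ≤ 1) :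
    |∏ i ∈ s, f i - ∏ i ∈ s, g i| ≤ ∑ i ∈ s, |f i - g i| := by
  induction s using Finset.induction_on with
  | empty => simp
  | @insert a s ha ih =>
    rw [Finset.prod_insert ha, Finset.prod_insert ha, Finset.sum_insert ha]
    have hP : |∏ i ∈ s, f i| ≤ 1 := by
      rw [abs_of_nonneg (Finset.prod_nonneg fun i _ => (hf i).1)]
      exact Finset.prod_le_one (fun i _ => (hf i).1) (fun i _ => (hf i).2)
    have hQ : |∏ i ∈ s, g i| ≤ 1 := by
      rw [abs_of_nonneg (Finset.prod_nonneg fun i _ => (hg i).1)]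
      exact Finset.prod_le_one (fun i _ => (hg i).1) (fun i _ => (hg i).2)
    have hfa : |f a| ≤ 1 := by
      rw [abs_of_nonneg (hf a).1]; exact (hf a).2
    calc |f a * ∏ i ∈ s, f i - g a * ∏ i ∈ s, g i|
        = |f a * (∏ i ∈ s, f i - ∏ i ∈ s, g i) + (f a - g a) * ∏ i ∈ s, g i| := by
          ring_nf
      _ ≤ |f a * (∏ i ∈ s, f i - ∏ i ∈ s, g i)| + |(f a - g a) * ∏ i ∈ s, g i| :=
          abs_add_le _ _
      _ = |f a| * |∏ i ∈ s, f i - ∏ i ∈ s, g i| + |f a - g a| * |∏ i ∈ s, g i| := by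
          rw [abs_mul, abs_mul]
      _ ≤ 1 * (∑ i ∈ s, |f i - g i|) + |f a - g a| * 1 := by
          gcongr
      _ = |f a - g a| + ∑ i ∈ s, |f i - g i| := by ring


/-- Under an ε-perturbation of the probabilities, all protected ePD values change
by at most ε·|T|·PD, and using the wrong scenario's optimum loses at most twice
that amount. -/
theorem wrong_scenario_loss_bound {A T : Type} [Fintype A] [Fintype T] [DecidableEq T]
    (lam : A → ℝ) (L : A → Finset T) (p₁ p₂ : T → ℝ) (ε : ℝ)
    (hlam : ∀ a, 0 ≤ lam a)
    (hL : ∀ a, (L a).Nonempty)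
    (hp₁ : ∀ i, 0 ≤ p₁ i ∧ p₁ i ≤ 1)
    (hp₂ : ∀ i, 0 ≤ p₂ i ∧ p₂ i ≤ 1)
    (hε : ∀ i, |p₁ i - p₂ i| ≤ ε)
    (f₁ f₂ : Finset T → ℝ)
    (hf₁ : ∀ S, f₁ S = ∑ a : A, lam a * (1 - ∏ i ∈ L a \ S, p₁ i))
    (hf₂ : ∀ S, f₂ S = ∑ a : A, lam a * (1 - ∏ i ∈ L a \ S, p₂ i))
    (k : ℕ) (S₁ S₂ : Finset T)
    (hS₁card : S₁.card ≤ k) (hS₂card : S₂.card ≤ k)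
    (hS₁opt : ∀ S : Finset T, S.card ≤ k → f₁ S ≤ f₁ S₁)
    (hS₂opt : ∀ S : Finset T, S.card ≤ k → f₂ S ≤ f₂ S₂) :
    (∀ S : Finset T, |f₁ S - f₂ S| ≤ ε * (Fintype.card T) * ∑ a : A, lam a) ∧
      f₁ S₁ - f₁ S₂ ≤ 2 * ε * (Fintype.card T) * ∑ a : A, lam a := by
  have key : ∀ S : Finset T, |f₁ S - f₂ S| ≤ ε * (Fintype.card T) * ∑ a : A, lam a := by
    intro S
    rw [hf₁, hf₂, ← Finset.sum_sub_distrib]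
    calc |∑ a : A, (lam a * (1 - ∏ i ∈ L a \ S, p₁ i) - lam a * (1 - ∏ i ∈ L a \ S, p₂ i))|
        ≤ ∑ a : A, |lam a * (1 - ∏ i ∈ L a \ S, p₁ i) - lam a * (1 - ∏ i ∈ L a \ S, p₂ i)| :=
          Finset.abs_sum_le_sum_abs _ _
      _ ≤ ∑ a : A, ε * (Fintype.card T) * lam a := by
          apply Finset.sum_le_sum
          intro a _
          have hε0 : 0 ≤ ε := by
            obtain ⟨i, _⟩ := hL a
            exact (abs_nonneg _).trans (hε i)
          have h1 : |lam a * (1 - ∏ i ∈ L a \ S, p₁ i) - lam a * (1 - ∏ i ∈ L a \ S, p₂ i)|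
              = lam a * |∏ i ∈ L a \ S, p₂ i - ∏ i ∈ L a \ S, p₁ i| := by
            have : lam a * (1 - ∏ i ∈ L a \ S, p₁ i) - lam a * (1 - ∏ i ∈ L a \ S, p₂ i)
                = lam a * (∏ i ∈ L a \ S, p₂ i - ∏ i ∈ L a \ S, p₁ i) := by ring
            rw [this, abs_mul, abs_of_nonneg (hlam a)]
          rw [h1]
          have h2 : |∏ i ∈ L a \ S, p₂ i - ∏ i ∈ L a \ S, p₁ i|
              ≤ ∑ i ∈ L a \ S, |p₂ i - p₁ i| := prod_diff_abs_le _ _ _ hp₂ hp₁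
          have h3 : ∑ i ∈ L a \ S, |p₂ i - p₁ i| ≤ (Fintype.card T) * ε := by
            calc ∑ i ∈ L a \ S, |p₂ i - p₁ i| ≤ ∑ _i ∈ L a \ S, ε := by
                  apply Finset.sum_le_sum
                  intro i _
                  rw [abs_sub_comm]; exact hε i
              _ = (L a \ S).card * ε := by
                  rw [Finset.sum_const, nsmul_eq_mul]
              _ ≤ (Fintype.card T) * ε := by
                  gcongr
                  exact_mod_cast Finset.card_le_card (Finset.subset_univ _)
          calc lam a * |∏ i ∈ L a \ S, p₂ i - ∏ i ∈ L a \ S, p₁ i|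
              ≤ lam a * ((Fintype.card T) * ε) := by
                exact mul_le_mul_of_nonneg_left (h2.trans h3) (hlam a)
            _ = ε * (Fintype.card T) * lam a := by ring
      _ = ε * (Fintype.card T) * ∑ a : A, lam a := by rw [← Finset.mul_sum]
  refine ⟨key, ?_⟩
  have h1 := key S₁
  have h2 := key S₂
  have h3 := hS₂opt S₁ hS₁card
  have := abs_le.mp h1
  have := abs_le.mp h2
  linarith [(abs_le.mp h1).1, (abs_le.mp h1).2, (abs_le.mp h2).1, (abs_le.mp h2).2]
end

section
/- If the branch lengths of two scenarios satisfy λ²_a ∈ [(1−δ)λ¹_a, (1+δ)λ¹_a] for all arcs a (same tree and same probabilities), then for every subset S ⊆ T, |f¹(S) − f²(S)| ≤ δ · f¹(T) = δ · Σ_a λ¹_a, where f^ω(S) uses branch lengths λ^ω; consequently the ePD loss from protecting the set optimal for the wrong branch-length scenario is at most 2δ Σ_a λ¹_a. -/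
/-- Stability of the protected ePD under a relative δ-perturbation of the branch
lengths, and the resulting bound on the loss from using the wrong scenario's
optimal set. -/
theorem branch_length_perturbation {A T : Type} [Fintype A] [DecidableEq T]
    (lam₁ lam₂ : A → ℝ) (L : A → Finset T) (p : T → ℝ) (δ : ℝ)
    (hδ0 : 0 ≤ δ) (hδ1 : δ ≤ 1)
    (hlam₁ : ∀ a, 0 ≤ lam₁ a)
    (hlam₂ : ∀ a, (1 - δ) * lam₁ a ≤ lam₂ a ∧ lam₂ a ≤ (1 + δ) * lam₁ a)
    (hL : ∀ a, (L a).Nonempty)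
    (hp : ∀ i, 0 ≤ p i ∧ p i ≤ 1)
    (f₁ f₂ : Finset T → ℝ)
    (hf₁ : ∀ S, f₁ S = ∑ a : A, lam₁ a * (1 - ∏ i ∈ L a \ S, p i))
    (hf₂ : ∀ S, f₂ S = ∑ a : A, lam₂ a * (1 - ∏ i ∈ L a \ S, p i))
    (k : ℕ) (S₁ S₂ : Finset T)
    (hS₁card : S₁.card ≤ k) (hS₂card : S₂.card ≤ k)
    (hS₁opt : ∀ S : Finset T, S.card ≤ k → f₁ S ≤ f₁ S₁)
    (hS₂opt : ∀ S : Finset T, S.card ≤ k → f₂ S ≤ f₂ S₂) :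
    (∀ S : Finset T, |f₁ S - f₂ S| ≤ δ * ∑ a : A, lam₁ a) ∧
      f₁ S₁ - f₁ S₂ ≤ 2 * δ * ∑ a : A, lam₁ a := by
  have key : ∀ S : Finset T, |f₁ S - f₂ S| ≤ δ * ∑ a : A, lam₁ a := by
    intro S
    rw [hf₁, hf₂, ← Finset.sum_sub_distrib]
    rw [Finset.mul_sum]
    calc |∑ a : A, (lam₁ a * (1 - ∏ i ∈ L a \ S, p i)
            - lam₂ a * (1 - ∏ i ∈ L a \ S, p i))|
        ≤ ∑ a : A, |lam₁ a * (1 - ∏ i ∈ L a \ S, p i)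
            - lam₂ a * (1 - ∏ i ∈ L a \ S, p i)| := Finset.abs_sum_le_sum_abs _ _
      _ ≤ ∑ a : A, δ * lam₁ a := by
          apply Finset.sum_le_sum
          intro a _
          rw [← sub_mul, abs_mul]
          have hq0 : (0:ℝ) ≤ ∏ i ∈ L a \ S, p i :=
            Finset.prod_nonneg fun i _ => (hp i).1
          have hq1 : (∏ i ∈ L a \ S, p i) ≤ 1 :=
            Finset.prod_le_one (fun i _ => (hp i).1) (fun i _ => (hp i).2)
          have h1 : |1 - ∏ i ∈ L a \ S, p i| ≤ 1 := by
            rw [abs_of_nonneg (by linarith)]; linarith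
          have h2 : |lam₁ a - lam₂ a| ≤ δ * lam₁ a := by
            have := (hlam₂ a).1; have := (hlam₂ a).2
            rw [abs_le]; constructor <;> nlinarith
          calc |lam₁ a - lam₂ a| * |1 - ∏ i ∈ L a \ S, p i|
              ≤ (δ * lam₁ a) * 1 := by
                apply mul_le_mul h2 h1 (abs_nonneg _)
                exact mul_nonneg hδ0 (hlam₁ a)
            _ = δ * lam₁ a := by ring
  refine ⟨key, ?_⟩
  have h1 := abs_le.mp (key S₁)
  have h2 := abs_le.mp (key S₂)
  have h3 := hS₂opt S₁ hS₁card
  linarith [h1.2, h2.1]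
end
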